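/- arXiv:1407.8069 — 3 statements merged into one kernel-verified Lean document; each statement's English description precedes it below -/
import Mathlib

section
/- Let F be a field, Q(x,y) a bivariate polynomial over F interpolating n points (x_i, h_i) ∈ F² with multiplicity r (i.e., Q(x + x_i, y + h_i) has no monomial of total degree < r), and let g = v/w be a rational function with w(x_i) ≠ 0 and v(x_i)/w(x_i) = h_i for all i in a subset I ⊆ {1,…,n}. If deg(v) ≤ V, deg(w) ≤ W, and deg_{1,V−W}(Q) + W·deg_y(Q) < r·|I|, and the x_i for i ∈ I are distinct, then Q(x, g(x)) = 0 as a rational function. -/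
open Polynomial

/-- The bivariate polynomial `Q(x + x₀, y + y₀)`, where a bivariate polynomial is
represented as an element of `F[x][y]` (outer variable `y`, coefficients in `F[x]`). -/
noncomputable def shiftBivar {F : Type*} [Field F]
    (Q : Polynomial (Polynomial F)) (x₀ y₀ : F) : Polynomial (Polynomial F) :=
  (Q.map ((Polynomial.aeval (Polynomial.X + Polynomial.C x₀)).toRingHom :
      Polynomial F →+* Polynomial F)).comp
    (Polynomial.X + Polynomial.C (Polynomial.C y₀))

/-- `Q` passes through `(x₀, y₀)` with multiplicity (at least) `r`:
the shift of `Q` to that point has no monomial of total degree `< r`. -/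
def PassesWithMult {F : Type*} [Field F]
    (Q : Polynomial (Polynomial F)) (x₀ y₀ : F) (r : ℕ) : Prop :=
  ∀ a b : ℕ, a + b < r → ((shiftBivar Q x₀ y₀).coeff b).coeff a = 0

lemma aux_hom {F : Type*} [Field F] (R : Polynomial (Polynomial F)) (s t : Polynomial F) (d : ℕ)
    (hR : R.natDegree ≤ d) (ht : t ≠ 0) :
    algebraMap (Polynomial F) (RatFunc F)
        (∑ j ∈ Finset.range (d+1), R.coeff j * s^j * t^(d-j))
      = algebraMap (Polynomial F) (RatFunc F) t ^ d *
        Polynomial.eval₂ (algebraMap (Polynomial F) (RatFunc F))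
          (algebraMap (Polynomial F) (RatFunc F) s / algebraMap (Polynomial F) (RatFunc F) t) R := by
  set φ := algebraMap (Polynomial F) (RatFunc F) with hφ
  have htφ : φ t ≠ 0 := by
    rw [hφ]
    exact (map_ne_zero_iff _ (RatFunc.algebraMap_injective F)).mpr ht
  rw [Polynomial.eval₂_eq_sum_range' φ (Nat.lt_succ_of_le hR), map_sum, Finset.mul_sum]
  refine Finset.sum_congr rfl fun j hj => ?_
  have hjd : j ≤ d := Nat.lt_succ_iff.mp (Finset.mem_range.mp hj)
  rw [map_mul, map_mul, map_pow, map_pow]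
  have hsplit : φ t ^ d = φ t ^ j * φ t ^ (d - j) := by
    rw [← pow_add, Nat.add_sub_cancel' hjd]
  rw [hsplit, div_pow]
  field_simp

lemma aux_shift {F : Type*} [Field F] (R : Polynomial (Polynomial F)) (s t : Polynomial F) (c : F)
    (d : ℕ) (hR : R.natDegree ≤ d) (ht : t ≠ 0) :
    ∑ j ∈ Finset.range (d+1),
        (R.comp (Polynomial.X + Polynomial.C (Polynomial.C c))).coeff j * s^j * t^(d-j)
      = ∑ b ∈ Finset.range (d+1), R.coeff b * (s + Polynomial.C c * t)^b * t^(d-b) := by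
  apply RatFunc.algebraMap_injective F
  set φ := algebraMap (Polynomial F) (RatFunc F) with hφ
  have htφ : φ t ≠ 0 := by
    rw [hφ]
    exact (map_ne_zero_iff _ (RatFunc.algebraMap_injective F)).mpr ht
  have h1 : (R.comp (Polynomial.X + Polynomial.C (Polynomial.C c))).natDegree ≤ d := by
    refine le_trans natDegree_comp_le ?_
    simpa [natDegree_X_add_C] using hR
  rw [aux_hom _ _ _ _ h1 ht, aux_hom _ _ _ _ hR ht, eval₂_comp]
  congr 2
  rw [eval₂_add, eval₂_X, eval₂_C, map_add, map_mul]
  field_simp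
  have ht' : algebraMap (Polynomial F) (RatFunc F) t ≠ 0 := htφ
  rw [div_add' _ _ _ ht']
  ring

theorem rational_interpolation_vanishing {F : Type*} [Field F]
    (Q : Polynomial (Polynomial F)) (n : ℕ) (x h : Fin n → F)
    (r : ℕ) (hinterp : ∀ i, PassesWithMult Q (x i) (h i) r)
    (I : Finset (Fin n)) (hxinj : Set.InjOn x (I : Set (Fin n)))
    (v w : Polynomial F)
    (hwI : ∀ i ∈ I, w.eval (x i) ≠ 0)
    (hgI : ∀ i ∈ I, v.eval (x i) = h i * w.eval (x i))
    (V W : ℕ) (hv : v.natDegree ≤ V) (hw : w ≠ 0) (hwd : w.natDegree ≤ W)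
    (D : ℤ)
    (hwdeg : ∀ j, Q.coeff j ≠ 0 →
      ((Q.coeff j).natDegree : ℤ) + ((V : ℤ) - (W : ℤ)) * j ≤ D)
    (hlt : D + (W : ℤ) * Q.natDegree < (r : ℤ) * I.card) :
    Polynomial.eval₂ (algebraMap (Polynomial F) (RatFunc F))
      (algebraMap (Polynomial F) (RatFunc F) v /
        algebraMap (Polynomial F) (RatFunc F) w) Q = 0 := by
  set φ := algebraMap (Polynomial F) (RatFunc F) with hφ
  set d := Q.natDegree with hd
  set P : Polynomial F := ∑ j ∈ Finset.range (d+1), Q.coeff j * v^j * w^(d-j) with hP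
  -- Main claim: P = 0
  have hP0 : P = 0 := by
    by_contra hPne
    -- divisibility at each point
    have hdvd : ∀ i ∈ I, (X - C (x i))^r ∣ P := by
      intro i hi
      set τ : Polynomial F →ₐ[F] Polynomial F := Polynomial.aeval (X + C (x i)) with hτ
      set σ : Polynomial F →ₐ[F] Polynomial F := Polynomial.aeval (X - C (x i)) with hσ
      have hστ : ∀ p : Polynomial F, σ (τ p) = p := by
        intro p
        show (p.comp (X + C (x i))).comp (X - C (x i)) = p
        rw [comp_assoc, add_comp, X_comp, C_comp, sub_add_cancel, comp_X]
      have hτw : τ w ≠ 0 := by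
        intro h0
        apply hw
        rw [← hστ w, h0, map_zero]
      set R := shiftBivar Q (x i) (h i) with hR
      have hback : R.comp (X + C (C (-(h i)))) = Q.map (τ.toRingHom :
          Polynomial F →+* Polynomial F) := by
        rw [hR]
        unfold shiftBivar
        rw [comp_assoc, add_comp, X_comp, C_comp, add_assoc, ← C_add, ← C_add, neg_add_cancel, map_zero, C_0,
          add_zero, comp_X]
      have hdR : R.natDegree ≤ d := by
        rw [hR]
        unfold shiftBivar
        refine le_trans natDegree_comp_le ?_
        simpa [natDegree_X_add_C] using natDegree_map_le
      have key : τ P = ∑ b ∈ Finset.range (d+1),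
          R.coeff b * (τ v + C (-(h i)) * τ w)^b * (τ w)^(d-b) := by
        have haux := aux_shift R (τ v) (τ w) (-(h i)) d hdR hτw
        rw [hback] at haux
        rw [← haux, hP, map_sum]
        refine Finset.sum_congr rfl fun j _ => ?_
        rw [map_mul, map_mul, map_pow, map_pow, coeff_map]
        rfl
      have hXbase : (X : Polynomial F) ∣ (τ v + C (-(h i)) * τ w) := by
        rw [X_dvd_iff, coeff_zero_eq_eval_zero]
        have hv0 : (τ v).eval 0 = v.eval (x i) := by
          show ((v.comp (X + C (x i))).eval 0) = _
          rw [eval_comp]; simp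
        have hw0 : (τ w).eval 0 = w.eval (x i) := by
          show ((w.comp (X + C (x i))).eval 0) = _
          rw [eval_comp]; simp
        simp [hv0, hw0, hgI i hi]
      have hXr : (X : Polynomial F)^r ∣ τ P := by
        rw [key]
        apply Finset.dvd_sum
        intro b _
        rcases le_or_gt r b with hrb | hbr
        · refine dvd_mul_of_dvd_left (dvd_mul_of_dvd_right ?_ _) _
          exact (pow_dvd_pow _ hrb).trans (pow_dvd_pow_of_dvd hXbase b)
        · have h1 : (X : Polynomial F)^(r-b) ∣ R.coeff b := by
            rw [X_pow_dvd_iff]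
            intro a ha
            exact hinterp i a b (by omega)
          have h2 : (X : Polynomial F)^b ∣ (τ v + C (-(h i)) * τ w)^b :=
            pow_dvd_pow_of_dvd hXbase b
          have hsplit : (X : Polynomial F)^r = X^(r-b) * X^b := by
            rw [← pow_add]
            congr 1
            omega
          rw [hsplit]
          exact dvd_mul_of_dvd_left (mul_dvd_mul h1 h2) _
      have := map_dvd σ hXr
      rw [map_pow, hστ P] at this
      simpa [hσ] using this
    -- product divides
    have hpair : (↑I : Set (Fin n)).Pairwise (Function.onFun IsCoprime fun i => (X - C (x i))^r) := by
      intro i hi j hj hij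
      refine IsCoprime.pow (isCoprime_X_sub_C_of_isUnit_sub ?_)
      refine Ne.isUnit (sub_ne_zero.mpr ?_)
      exact fun e => hij (hxinj hi hj e)
    have hprod : ∏ i ∈ I, (X - C (x i))^r ∣ P :=
      Finset.prod_dvd_of_coprime hpair hdvd
    have hdegprod : (∏ i ∈ I, (X - C (x i))^r).natDegree = r * I.card := by
      rw [natDegree_prod _ _ (fun i _ => pow_ne_zero r (X_sub_C_ne_zero (x i)))]
      simp [natDegree_pow, natDegree_X_sub_C, mul_comm]
    have hdegP : r * I.card ≤ P.natDegree := by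
      rw [← hdegprod]
      exact natDegree_le_of_dvd hprod hPne
    -- find a nonzero term of top degree
    have hcoeff : P.coeff P.natDegree ≠ 0 := fun hc => hPne (leadingCoeff_eq_zero.mp hc)
    rw [hP, finset_sum_coeff] at hcoeff
    obtain ⟨j, hj, hne⟩ := Finset.exists_ne_zero_of_sum_ne_zero hcoeff
    have hjd : j ≤ d := Nat.lt_succ_iff.mp (Finset.mem_range.mp hj)
    have hQj : Q.coeff j ≠ 0 := by
      intro e
      apply hne
      rw [e]
      simp
    have hN : P.natDegree ≤ (Q.coeff j * v^j * w^(d-j)).natDegree :=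
      le_natDegree_of_ne_zero hne
    have hdeg : (Q.coeff j * v^j * w^(d-j)).natDegree ≤
        (Q.coeff j).natDegree + j * V + (d-j) * W := by
      refine le_trans natDegree_mul_le ?_
      refine add_le_add (le_trans natDegree_mul_le ?_) ?_
      · exact add_le_add le_rfl (le_trans natDegree_pow_le (Nat.mul_le_mul_left j hv))
      · exact le_trans natDegree_pow_le (Nat.mul_le_mul_left (d-j) hwd)
    have hZ : ((r : ℤ) * I.card) ≤
        ((Q.coeff j).natDegree : ℤ) + (j : ℤ) * V + ((d : ℤ) - j) * W := by
      have := le_trans hdegP (le_trans hN hdeg)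
      have hcast : (((Q.coeff j).natDegree + j * V + (d-j) * W : ℕ) : ℤ)
          = ((Q.coeff j).natDegree : ℤ) + (j : ℤ) * V + ((d : ℤ) - j) * W := by
        push_cast [hjd]
        ring
      calc ((r : ℤ) * I.card) = ((r * I.card : ℕ) : ℤ) := by push_cast; ring
        _ ≤ (((Q.coeff j).natDegree + j * V + (d-j) * W : ℕ) : ℤ) := by exact_mod_cast this
        _ = _ := hcast
    have hD := hwdeg j hQj
    nlinarith [hZ, hD, hlt]
  -- conclude
  have h1 := aux_hom Q v w d le_rfl hw
  rw [← hP, hP0, map_zero] at h1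
  have hφw : φ w ≠ 0 := by
    rw [hφ]
    exact (map_ne_zero_iff _ (RatFunc.algebraMap_injective F)).mpr hw
  exact ((mul_eq_zero.mp h1.symm).resolve_left (pow_ne_zero d hφw))
end

section
/- Let F be a field and let C, D_Y be positive integers and m ≥ 0 an integer with m·D_Y·(D_Y + 1)/2 ≤ C + 1. Consider bivariate polynomials Q(x,y) = Σ_{j=0}^{D_Y} q_j(x)·y^j. If a homogeneous linear system of C equations in the coefficients of Q is imposed, then there exists a nonzero Q with deg_y(Q) ≤ D_Y satisfying all C equations and with (1, m)-weighted degree deg_{1,m}(Q) ≤ D, where D = ⌈(C + 1)/(D_Y + 1)⌉ − 1 + m·D_Y (more precisely: the number of monomials x^a y^b with b ≤ D_Y and a + m·b ≤ D is (D+1)(D_Y+1) − m·D_Y(D_Y+1)/2 when D ≥ m·D_Y, and if this count exceeds C then a nonzero solution exists). -/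
open Finset

lemma count_monomials (F : Type*) (DY m D' : ℕ) (h : m * DY ≤ D') :
    (((Finset.range (D' + 1)) ×ˢ (Finset.range (DY + 1))).filter
        (fun p => p.1 + m * p.2 ≤ D')).card =
      (D' + 1) * (DY + 1) - m * DY * (DY + 1) / 2 := by
  rw [Finset.card_eq_sum_card_fiberwise (f := fun p : ℕ × ℕ => p.2)
    (t := Finset.range (DY + 1)) (by
      intro p hp
      simp only [Finset.mem_coe, Finset.mem_filter, Finset.mem_product, Finset.mem_range] at hp ⊢
      exact hp.1.2)]
  have hfib : ∀ b ∈ Finset.range (DY + 1),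
      ((((Finset.range (D' + 1)) ×ˢ (Finset.range (DY + 1))).filter
        (fun p => p.1 + m * p.2 ≤ D')).filter (fun p => p.2 = b)).card
      = (D' + 1) - m * b := by
    intro b hb
    simp only [Finset.mem_range] at hb
    have hmb : m * b ≤ D' := le_trans (Nat.mul_le_mul_left m (by omega)) h
    have : ((((Finset.range (D' + 1)) ×ˢ (Finset.range (DY + 1))).filter
        (fun p => p.1 + m * p.2 ≤ D')).filter (fun p => p.2 = b)) =
        (Finset.range (D' - m * b + 1)).image (fun a => (a, b)) := by
      ext ⟨x, y⟩
      simp only [Finset.mem_filter, Finset.mem_product, Finset.mem_range,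
        Finset.mem_image, Prod.mk.injEq]
      constructor
      · rintro ⟨⟨⟨ha, hb'⟩, hw⟩, rfl⟩
        exact ⟨x, by omega, rfl, rfl⟩
      · rintro ⟨a, ha, rfl, rfl⟩
        exact ⟨⟨⟨by omega, by omega⟩, by omega⟩, rfl⟩
    rw [this, Finset.card_image_of_injective _ (fun a a' hh => by
      simpa using hh), Finset.card_range]
    omega
  rw [Finset.sum_congr rfl hfib]
  have hsub : ∀ b ∈ Finset.range (DY + 1), m * b ≤ D' + 1 := by
    intro b hb
    simp only [Finset.mem_range] at hb
    exact le_trans (le_trans (Nat.mul_le_mul_left m (by omega)) h) (by omega)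
  rw [Finset.sum_tsub_distrib _ hsub, Finset.sum_const, Finset.card_range,
    smul_eq_mul, ← Finset.mul_sum, Finset.sum_range_id]
  have hDYs : DY + 1 - 1 = DY := rfl
  rw [hDYs]
  have h2 : 2 ∣ (DY + 1) * DY := by
    rw [mul_comm]
    exact (Nat.even_mul_succ_self DY).two_dvd
  have hnum : m * ((DY + 1) * DY) = m * DY * (DY + 1) := by ring
  rw [← Nat.mul_div_assoc m h2, hnum, mul_comm (DY + 1) (D' + 1)]

theorem exists_nonzero_interpolating_polynomial {F : Type*} [Field F]
    (C DY : ℕ) (hC : 0 < C) (hDY : 0 < DY) (m : ℕ)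
    (hm : m * DY * (DY + 1) / 2 ≤ C + 1)
    (D : ℕ) (hD : D = (C + 1 + DY) / (DY + 1) - 1 + m * DY) :
    (∀ D' : ℕ, m * DY ≤ D' →
      (((Finset.range (D' + 1)) ×ˢ (Finset.range (DY + 1))).filter
          (fun p => p.1 + m * p.2 ≤ D')).card =
        (D' + 1) * (DY + 1) - m * DY * (DY + 1) / 2) ∧
    ∀ L : Fin C → ((ℕ × ℕ →₀ F) →ₗ[F] F),
      ∃ Q : ℕ × ℕ →₀ F, Q ≠ 0 ∧ (∀ i, L i Q = 0) ∧
        ∀ p ∈ Q.support, p.2 ≤ DY ∧ p.1 + m * p.2 ≤ D := by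
  refine ⟨fun D' h => count_monomials F DY m D' h, ?_⟩
  intro L
  set q := (C + 1 + DY) / (DY + 1) with hq
  have hq1 : 1 ≤ q := Nat.one_le_div_iff (by omega) |>.mpr (by omega)
  have hmD : m * DY ≤ D := by omega
  have hD1 : D + 1 = q + m * DY := by omega
  set S := (((Finset.range (D + 1)) ×ˢ (Finset.range (DY + 1))).filter
      (fun p => p.1 + m * p.2 ≤ D)) with hS
  have hcard : S.card = (D + 1) * (DY + 1) - m * DY * (DY + 1) / 2 :=
    count_monomials F DY m D hmD
  have hCq0 : C + 1 ≤ (DY + 1) * ((C + 1 + DY) / (DY + 1)) := by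
    have h1 := Nat.div_add_mod (C + 1 + DY) (DY + 1)
    have h2 := Nat.mod_lt (C + 1 + DY) (show 0 < DY + 1 by omega)
    omega
  have hCq : C + 1 ≤ q * (DY + 1) := by rw [hq, mul_comm]; exact hCq0
  have heven : 2 ∣ m * DY * (DY + 1) := by
    rw [mul_assoc]
    exact Dvd.dvd.mul_left (Nat.even_mul_succ_self DY).two_dvd m
  have hfull : (D + 1) * (DY + 1) = q * (DY + 1) + m * DY * (DY + 1) := by
    rw [hD1]; ring
  have hcard2 : S.card = q * (DY + 1) + m * DY * (DY + 1) / 2 := by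
    rw [hcard, hfull]; omega
  have hcard' : C + 1 ≤ S.card := by
    rw [hcard2]; exact le_trans hCq (Nat.le_add_right _ _)
  classical
  let φ : (↥S →₀ F) →ₗ[F] (ℕ × ℕ →₀ F) := Finsupp.lmapDomain F F Subtype.val
  let T : (↥S →₀ F) →ₗ[F] (Fin C → F) := LinearMap.pi (fun i => (L i).comp φ)
  have : ∃ v : ↥S →₀ F, v ≠ 0 ∧ T v = 0 := by
    by_contra hcon
    push_neg at hcon
    have hinj : Function.Injective T := by
      rw [← LinearMap.ker_eq_bot, LinearMap.ker_eq_bot']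
      intro v hv
      by_contra hv0
      exact (hcon v hv0) hv
    have hle := LinearMap.finrank_le_finrank_of_injective hinj
    rw [Module.finrank_finsupp_self, Fintype.card_coe] at hle
    have hfr : Module.finrank F (Fin C → F) = C := by simp
    omega
  obtain ⟨v, hv0, hvT⟩ := this
  refine ⟨Finsupp.embDomain ⟨Subtype.val, Subtype.val_injective⟩ v, ?_, ?_, ?_⟩
  · simpa [Finsupp.embDomain_eq_zero] using hv0
  · intro i
    have hTv : T v i = 0 := by rw [hvT]; rfl
    simpa [T, φ, Finsupp.embDomain_eq_mapDomain, Finsupp.lmapDomain_apply] using hTv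
  · intro p hp
    rw [Finsupp.support_embDomain, Finset.mem_map] at hp
    obtain ⟨s, _, rfl⟩ := hp
    obtain ⟨⟨a, b⟩, hs⟩ := s
    have hs' : (a, b) ∈ (((Finset.range (D + 1)) ×ˢ (Finset.range (DY + 1))).filter
      (fun p => p.1 + m * p.2 ≤ D)) := hs
    simp only [Finset.mem_filter, Finset.mem_product, Finset.mem_range] at hs'
    simp only [Function.Embedding.coeFn_mk]
    exact ⟨by omega, hs'.2⟩
end

section
/- With notation as in the Forney formula setup: let Λ(x) = Π_{i∈I}(1 − α^i x) be the error locator of an error pattern e with support I over GF(q), n = q−1, and let Ω satisfy Λ·E = Ω·(1 − x^n) where E is the Fourier transform of e. Then for each i ∈ I, the error value satisfies e_i = −E(α^{−i}) = −Ω(α^{−i}) / (α^{−i}·Λ′(α^{−i})), where Λ′ is the formal derivative. -/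
open Polynomial Finset

private lemma forneyAux_derivative_prod {R : Type*} [CommRing R] {ι : Type*} [DecidableEq ι]
    (s : Finset ι) (f : ι → Polynomial R) :
    Polynomial.derivative (∏ i ∈ s, f i)
      = ∑ i ∈ s, (∏ j ∈ s.erase i, f j) * Polynomial.derivative (f i) := by
  classical
  induction s using Finset.induction_on with
  | empty => simp
  | insert a t ha ih =>
    rw [Finset.prod_insert ha, derivative_mul, ih, Finset.sum_insert ha,
      Finset.erase_insert ha, Finset.mul_sum]
    have h2 : ∀ b ∈ t, (∏ j ∈ (insert a t).erase b, f j) * derivative (f b)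
        = f a * ((∏ j ∈ t.erase b, f j) * derivative (f b)) := by
      intro b hb
      rw [Finset.erase_insert_of_ne (by rintro rfl; exact ha hb),
        Finset.prod_insert (fun h => ha (Finset.mem_of_mem_erase h))]
      ring
    rw [Finset.sum_congr rfl h2]
    ring

theorem forney_formula {F : Type*} [Field F] [Fintype F]
    (α : F) (hα0 : α ≠ 0) (hα : ∀ x : F, x ≠ 0 → ∃ k : ℕ, α ^ k = x)
    (n : ℕ) (hn : n = Fintype.card F - 1)
    (e : Fin n → F) (I : Finset (Fin n)) (hI : ∀ i, e i ≠ 0 ↔ i ∈ I)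
    (E Λ Ω : Polynomial F)
    (hE : E = ∑ j ∈ Finset.range n,
      Polynomial.C (∑ i : Fin n, e i * α ^ (((i : ℕ) + 1) * j)) * Polynomial.X ^ j)
    (hΛ : Λ = ∏ i ∈ I, (1 - Polynomial.C (α ^ ((i : ℕ) + 1)) * Polynomial.X))
    (hΩdeg : Ω.degree < Λ.degree)
    (hkey : Λ * E = Ω * (1 - Polynomial.X ^ n)) :
    ∀ i ∈ I,
      e i = -E.eval (α⁻¹ ^ ((i : ℕ) + 1)) ∧
      e i = -Ω.eval (α⁻¹ ^ ((i : ℕ) + 1)) /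
        (α⁻¹ ^ ((i : ℕ) + 1) *
          (Polynomial.derivative Λ).eval (α⁻¹ ^ ((i : ℕ) + 1))) := by
  intro i hi
  classical
  have hcard2 : 2 ≤ Fintype.card F := Fintype.one_lt_card
  have hnpos : 0 < n := by omega
  have hqz : (Fintype.card F : F) = 0 := FiniteField.cast_card_eq_zero F
  have hnF : (n : F) = -1 := by
    subst hn
    rw [Nat.cast_sub (by omega), hqz]
    ring
  have hαn : α ^ n = 1 := by
    subst hn; exact FiniteField.pow_card_sub_one_eq_one α hα0
  have hord : orderOf α = n := by
    have hu : ∀ y : Fˣ, y ∈ Subgroup.zpowers (Units.mk0 α hα0) := by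
      intro y
      obtain ⟨k, hk⟩ := hα y (Units.ne_zero y)
      rw [Subgroup.mem_zpowers_iff]
      exact ⟨k, by ext; push_cast; simpa using hk⟩
    have h1 := orderOf_eq_card_of_forall_mem_zpowers hu
    rw [Nat.card_eq_fintype_card, Fintype.card_units] at h1
    have h2 : orderOf α = orderOf (Units.mk0 α hα0) :=
      by simpa using orderOf_units (y := Units.mk0 α hα0)
    rw [h2, h1, hn]
  have hinj : ∀ a b : ℕ, a < n → b < n → α ^ a = α ^ b → a = b := by
    intro a b ha hb hab
    wlog h : a ≤ b generalizing a b
    · exact (this b a hb ha hab.symm (le_of_not_ge h)).symm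
    have hpow : α ^ a * α ^ (b - a) = α ^ a * 1 := by
      rw [mul_one, ← pow_add, Nat.add_sub_cancel' h, hab]
    have h1 : α ^ (b - a) = 1 := mul_left_cancel₀ (pow_ne_zero a hα0) hpow
    have h2 : n ∣ b - a := hord ▸ orderOf_dvd_of_pow_eq_one h1
    have h3 : b - a = 0 := Nat.eq_zero_of_dvd_of_lt h2 (by omega) |>.symm ▸ rfl
    omega
  have hgeom : ∀ c : F, c ^ n = 1 → c ≠ 1 → ∑ j ∈ range n, c ^ j = 0 := by
    intro c hc1 hc
    rw [geom_sum_eq hc, hc1, sub_self, zero_div]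
  set β := α⁻¹ ^ ((i : ℕ) + 1) with hβ
  have hβα : α ^ ((i : ℕ) + 1) * β = 1 := by
    rw [hβ, ← mul_pow, mul_inv_cancel₀ hα0, one_pow]
  have hβ0 : β ≠ 0 := pow_ne_zero _ (inv_ne_zero hα0)
  have hβn : β ^ n = 1 := by
    rw [hβ, ← pow_mul, mul_comm, pow_mul, inv_pow, hαn, inv_one, one_pow]
  have hckey : ∀ k : Fin n, α ^ ((k : ℕ) + 1) * β = 1 ↔ k = i := by
    intro k
    constructor
    · intro hk
      have h1 : α ^ ((k : ℕ) + 1) = α ^ ((i : ℕ) + 1) :=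
        mul_right_cancel₀ hβ0 (hk.trans hβα.symm)
      rw [pow_succ, pow_succ] at h1
      have h2 : α ^ (k : ℕ) = α ^ (i : ℕ) := mul_right_cancel₀ hα0 h1
      exact Fin.ext (hinj _ _ k.2 i.2 h2)
    · rintro rfl; exact hβα
  have hcn : ∀ k : Fin n, (α ^ ((k : ℕ) + 1) * β) ^ n = 1 := by
    intro k
    rw [mul_pow, ← pow_mul, mul_comm ((k:ℕ)+1), pow_mul, hαn, one_pow, one_mul, hβn]
  have hEeval : E.eval β = -e i := by
    rw [hE]
    rw [eval_finset_sum]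
    simp only [eval_mul, eval_C, eval_pow, eval_X]
    have hstep : ∀ j ∈ range n,
        (∑ k : Fin n, e k * α ^ (((k : ℕ) + 1) * j)) * β ^ j
          = ∑ k : Fin n, e k * (α ^ ((k : ℕ) + 1) * β) ^ j := by
      intro j _
      rw [sum_mul]
      refine Finset.sum_congr rfl fun k _ => ?_
      rw [mul_assoc, mul_pow, pow_mul]
    rw [Finset.sum_congr rfl hstep, Finset.sum_comm]
    have hinner : ∀ k : Fin n,
        (∑ j ∈ range n, e k * (α ^ ((k : ℕ) + 1) * β) ^ j)
          = if k = i then e k * (n : F) else 0 := by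
      intro k
      rw [← mul_sum]
      by_cases hk : k = i
      · simp [hk, (hckey i).mpr rfl]
      · rw [hgeom _ (hcn k) (fun h => hk ((hckey k).mp h)), mul_zero, if_neg hk]
    rw [Finset.sum_congr rfl (fun k _ => hinner k), Finset.sum_ite_eq' Finset.univ i
      (fun k => e k * (n : F))]
    simp [hnF]
  have hΛβ : Λ.eval β = 0 := by
    rw [hΛ, eval_prod]
    refine Finset.prod_eq_zero hi ?_
    simp [hβα]
  have hβpred : β ^ (n - 1) = α ^ ((i : ℕ) + 1) := by
    have h1 : β ^ (n - 1) * β = 1 := by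
      rw [← pow_succ, Nat.sub_add_cancel hnpos, hβn]
    exact mul_right_cancel₀ hβ0 (h1.trans hβα.symm)
  have hdX : (derivative (1 - X ^ n : F[X])).eval β = α ^ ((i : ℕ) + 1) := by
    rw [derivative_sub, derivative_one, derivative_X_pow]
    simp [hnF, hβpred]
  have hd : (derivative Λ).eval β * E.eval β = Ω.eval β * α ^ ((i : ℕ) + 1) := by
    have h0 := congrArg derivative hkey
    rw [derivative_mul, derivative_mul] at h0
    have h2 := congrArg (eval β) h0
    simp only [eval_add, eval_mul] at h2
    rw [hΛβ, hdX] at h2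
    have hX0 : (1 - X ^ n : F[X]).eval β = 0 := by simp [hβn]
    rw [hX0] at h2
    simpa using h2
  have hdΛ : (derivative Λ).eval β
      = (∏ l ∈ I.erase i, (1 - α ^ ((l : ℕ) + 1) * β)) * (-α ^ ((i : ℕ) + 1)) := by
    rw [hΛ, forneyAux_derivative_prod, eval_finset_sum]
    rw [Finset.sum_eq_single i]
    · simp only [derivative_sub, derivative_one, derivative_C_mul, derivative_X, mul_one,
        zero_sub, eval_mul, eval_prod, eval_neg, eval_C, eval_sub, eval_one, eval_X]
      try ring
    · intro k hk hki
      rw [eval_mul, eval_prod, Finset.prod_eq_zero (i := i)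
        (Finset.mem_erase.mpr ⟨Ne.symm hki, hi⟩) (by simp [hβα]), zero_mul]
    · intro h; exact absurd hi h
  have hfac : ∀ l ∈ I.erase i, (1 : F) - α ^ ((l : ℕ) + 1) * β ≠ 0 := by
    intro l hl
    have hli : l ≠ i := (Finset.mem_erase.mp hl).1
    intro hz
    have : α ^ ((l : ℕ) + 1) * β = 1 := (sub_eq_zero.mp hz).symm
    exact hli ((hckey l).mp this)
  have hdΛ0 : (derivative Λ).eval β ≠ 0 := by
    rw [hdΛ]
    exact mul_ne_zero (Finset.prod_ne_zero_iff.mpr hfac)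
      (neg_ne_zero.mpr (pow_ne_zero _ hα0))
  have h1 : e i = -E.eval β := by rw [hEeval, neg_neg]
  refine ⟨h1, ?_⟩
  rw [h1, eq_div_iff (mul_ne_zero hβ0 hdΛ0)]
  linear_combination (-β) * hd + (-Ω.eval β) * hβα
end
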